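/- Given m_1, m_2 ∈ ℂ with 1 + m_1 m_2 ≠ 0, the unique solution of the cyclic recursion m_{j+3} = i(1 + m_j m_{j+1}) (mod 5) extending (m_1, m_2) is (m_1, m_2, (i - m_1)/(1 + m_1 m_2), i(1 + m_1 m_2), (i - m_2)/(1 + m_1 m_2)). -/

import Mathlib

open Complex

/-- If `1 + m₁m₂ ≠ 0`, the cyclic recursion `m_{j+3} = i(1 + m_j m_{j+1})` (mod 5) uniquely
determines the remaining multipliers:
`m₃ = (i - m₁)/(1 + m₁m₂)`, `m₄ = i(1 + m₁m₂)`, `m₅ = (i - m₂)/(1 + m₁m₂)`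
(with `m₅ = m 0` in the mod-5 labelling). -/
theorem stokes_multipliers_generic (m : ZMod 5 → ℂ)
    (hrec : ∀ j : ZMod 5, m (j + 3) = I * (1 + m j * m (j + 1)))
    (h : 1 + m 1 * m 2 ≠ 0) :
    m 3 = (I - m 1) / (1 + m 1 * m 2) ∧
    m 4 = I * (1 + m 1 * m 2) ∧
    m 0 = (I - m 2) / (1 + m 1 * m 2) := by
  have h1 := hrec 1
  have h3 := hrec 3
  have h4 := hrec 4
  simp only [show ((1 : ZMod 5) + 3 = 4) by decide, show ((3 : ZMod 5) + 3 = 1) by decide,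
    show ((3 : ZMod 5) + 1 = 4) by decide, show ((4 : ZMod 5) + 3 = 2) by decide,
    show ((4 : ZMod 5) + 1 = 0) by decide, show ((1 : ZMod 5) + 1 = 2) by decide] at h1 h3 h4
  refine ⟨?_, h1, ?_⟩
  · field_simp
    linear_combination h3 + (I * m 3) * h1 + (m 3 * (1 + m 1 * m 2) + I) * I_sq - I * I_sq
  · rw [eq_div_iff h]
    linear_combination h4 + (I * m 0) * h1 + (m 0 * (1 + m 1 * m 2) + I) * I_sq - I * I_sq
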